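/- Let n ≥ 3 be odd, let q_o = √(414 − 66√33)/16, and let 0 < q < q_o. Set ω_μ = nq for μ = 1,…,(n−1)/2, ω_μ = −nq for μ = (n−1)/2 + 1,…,n−1, ω_n = 0, and k = (n, n, …, n). Then the number of equilibria in Θ_{ω,k}, i.e., θ ∈ (−π,π]^n satisfying the equilibrium equations and OC1, is exactlyn 2^n − C(n−1, (n−1)/2), where C(a,b) denotes the binomial coefficient. -/

import Mathlib

open Real Set Finset

/-- `Θ_{ω,k}`: the set of equilibria of the rank-one coupled Kuramoto model lying in
`(-π,π]^n` and satisfying the output condition OC1. -/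
def kuramotoEquilibria (n : ℕ) (ω k : Fin n → ℝ) : Set (Fin n → ℝ) :=
  {θ | (∀ ν, θ ν ∈ Set.Ioc (-Real.pi) Real.pi) ∧
    (∀ ν, ω ν = (1 / (n : ℝ)) * ∑ μ, k ν * k μ * Real.sin (θ ν - θ μ)) ∧
    (∑ μ, k μ * Real.sin (θ μ) = 0 ∧ 0 ≤ ∑ μ, k μ * Real.cos (θ μ))}

namespace KurAux

noncomputable section

/-- The set of admissible values of `C = Σ cos θ_μ` for a given sign configuration. -/
def rset (q J e : ℝ) : Set ℝ := {C | q < C ∧ C - e = J * Real.sqrt (1 - q ^ 2 / C ^ 2)}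

/-- The quartic polynomial whose roots (with a sign condition) describe `rset`. -/
def P (q J e C : ℝ) : ℝ := C ^ 2 * (C - e) ^ 2 - J ^ 2 * (C ^ 2 - q ^ 2)

variable {q J e C : ℝ}

lemma one_sub_div_pos (hq0 : 0 < q) (hC : q < C) : 0 < 1 - q ^ 2 / C ^ 2 := by
  have h1 : q ^ 2 < C ^ 2 := by nlinarith
  have h2 : (0:ℝ) < C ^ 2 := by nlinarith
  rw [sub_pos, div_lt_one h2]; exact h1

lemma aux_sq (hq0 : 0 < q) (hC : q < C) :
    Real.sqrt (1 - q ^ 2 / C ^ 2) ^ 2 = 1 - q ^ 2 / C ^ 2 :=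
  Real.sq_sqrt (le_of_lt (one_sub_div_pos hq0 hC))

lemma aux_sqrt_pos (hq0 : 0 < q) (hC : q < C) : 0 < Real.sqrt (1 - q ^ 2 / C ^ 2) :=
  Real.sqrt_pos.2 (one_sub_div_pos hq0 hC)

lemma eq_iff_pos (hq0 : 0 < q) (hJ : 0 ≤ J) (hC : q < C) :
    C - e = J * Real.sqrt (1 - q ^ 2 / C ^ 2) ↔ (0 ≤ C - e ∧ P q J e C = 0) := by
  have hC0 : (0:ℝ) < C := lt_trans hq0 hC
  have hs := aux_sq hq0 hC
  set s := Real.sqrt (1 - q ^ 2 / C ^ 2) with hsdef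
  have hs0 : 0 ≤ s := Real.sqrt_nonneg _
  constructor
  · intro h
    refine ⟨h ▸ mul_nonneg hJ hs0, ?_⟩
    have : (C - e) ^ 2 = J ^ 2 * (1 - q ^ 2 / C ^ 2) := by
      rw [h, mul_pow, hs]
    unfold P
    field_simp at this
    nlinarith [this]
  · rintro ⟨hsign, hP⟩
    have h2 : (C - e) ^ 2 = (J * s) ^ 2 := by
      have hC2 : C ^ 2 ≠ 0 := by positivity
      unfold P at hP
      rw [mul_pow, hs]
      field_simp
      nlinarith [hP]
    have habs : |C - e| = |J * s| := by
      rw [← Real.sqrt_sq_eq_abs, ← Real.sqrt_sq_eq_abs, h2]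
    rwa [abs_of_nonneg hsign, abs_of_nonneg (mul_nonneg hJ hs0)] at habs

lemma eq_iff_neg (hq0 : 0 < q) (hJ : J ≤ 0) (hC : q < C) :
    C - e = J * Real.sqrt (1 - q ^ 2 / C ^ 2) ↔ (C - e ≤ 0 ∧ P q J e C = 0) := by
  have hs := aux_sq hq0 hC
  set s := Real.sqrt (1 - q ^ 2 / C ^ 2) with hsdef
  have hs0 : 0 ≤ s := Real.sqrt_nonneg _
  constructor
  · intro h
    refine ⟨h ▸ mul_nonpos_of_nonpos_of_nonneg hJ hs0, ?_⟩
    have : (C - e) ^ 2 = J ^ 2 * (1 - q ^ 2 / C ^ 2) := by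
      rw [h, mul_pow, hs]
    unfold P
    have hC0 : (0:ℝ) < C := lt_trans hq0 hC
    field_simp at this
    nlinarith [this]
  · rintro ⟨hsign, hP⟩
    have hC0 : (0:ℝ) < C := lt_trans hq0 hC
    have h2 : (C - e) ^ 2 = (J * s) ^ 2 := by
      unfold P at hP
      rw [mul_pow, hs]
      field_simp
      nlinarith [hP]
    have habs : |C - e| = |J * s| := by
      rw [← Real.sqrt_sq_eq_abs, ← Real.sqrt_sq_eq_abs, h2]
    rw [abs_of_nonpos hsign, abs_of_nonpos (mul_nonpos_of_nonpos_of_nonneg hJ hs0)] at habs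
    linarith

lemma contP : Continuous (fun C => P q J e C) := by
  unfold P; fun_prop

lemma hasDerivAt_P : HasDerivAt (fun C => P q J e C)
    (2 * C * (2 * C ^ 2 - 3 * e * C + e ^ 2 - J ^ 2)) C := by
  have h1 : HasDerivAt (fun x : ℝ => x ^ 2 * (x - e) ^ 2 - J ^ 2 * (x ^ 2 - q ^ 2))
      (2 * C * (C - e) ^ 2 + C ^ 2 * (2 * (C - e) ^ 1 * 1) - J ^ 2 * (2 * C)) C := by
    have hx : HasDerivAt (fun x : ℝ => x) 1 C := hasDerivAt_id C
    have h2 : HasDerivAt (fun x : ℝ => x ^ 2) (2 * C) C := by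
      simpa using hasDerivAt_pow 2 C
    have h3 : HasDerivAt (fun x : ℝ => (x - e) ^ 2) (2 * (C - e) ^ 1 * 1) C := by
      exact (hx.sub_const e).pow 2
    have h4 : HasDerivAt (fun x : ℝ => x ^ 2 - q ^ 2) (2 * C) C :=
      h2.sub_const _
    exact (h2.mul h3).sub (h4.const_mul (J ^ 2))
  convert h1 using 1
  · rfl
  · ring

/-! ### Monotonicity pieces of the quartic -/

def c1neg (J : ℝ) : ℝ := (Real.sqrt (8 * J ^ 2 + 1) - 3) / 4

def c1pos (J : ℝ) : ℝ := (Real.sqrt (8 * J ^ 2 + 1) + 3) / 4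

lemma sqS_sq (J : ℝ) : Real.sqrt (8 * J ^ 2 + 1) ^ 2 = 8 * J ^ 2 + 1 :=
  Real.sq_sqrt (by positivity)

lemma sqS_ge_three (hJ : 1 ≤ J ^ 2) : 3 ≤ Real.sqrt (8 * J ^ 2 + 1) := by
  have h9 : (9:ℝ) ≤ 8 * J ^ 2 + 1 := by nlinarith
  have := Real.sqrt_le_sqrt h9
  rwa [show (9:ℝ) = 3 ^ 2 by norm_num, Real.sqrt_sq (by norm_num : (0:ℝ) ≤ 3)] at this

lemma c1neg_nonneg (hJ : 1 ≤ J ^ 2) : 0 ≤ c1neg J := by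
  have := sqS_ge_three hJ
  unfold c1neg; linarith

lemma c1pos_ge (hJ : 1 ≤ J ^ 2) : (3:ℝ)/2 ≤ c1pos J := by
  have := sqS_ge_three hJ
  unfold c1pos; linarith

lemma quadneg_lt (hC0 : 0 < C) (hC : C < c1neg J) :
    2 * C ^ 2 + 3 * C + 1 - J ^ 2 < 0 := by
  have hS := sqS_sq J
  have hS0 : 0 ≤ Real.sqrt (8 * J ^ 2 + 1) := Real.sqrt_nonneg _
  unfold c1neg at hC
  nlinarith [hC, hS, hS0]

lemma quadneg_gt (hJ : 1 ≤ J ^ 2) (hC : c1neg J < C) :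
    0 < 2 * C ^ 2 + 3 * C + 1 - J ^ 2 := by
  have hS := sqS_sq J
  have hS0 : 0 ≤ Real.sqrt (8 * J ^ 2 + 1) := Real.sqrt_nonneg _
  have hC0 : 0 < C := lt_of_le_of_lt (c1neg_nonneg hJ) hC
  unfold c1neg at hC
  nlinarith [hC, hS, hS0]

lemma quadpos_lt (hJ : 1 ≤ J ^ 2) (hC0 : 0 < C) (hC : C < c1pos J) :
    2 * C ^ 2 - 3 * C + 1 - J ^ 2 < 0 := by
  have hS := sqS_sq J
  have hS0 : 0 ≤ Real.sqrt (8 * J ^ 2 + 1) := Real.sqrt_nonneg _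
  unfold c1pos at hC
  rcases le_or_gt (4 * C - 3) 0 with h | h
  · nlinarith [hJ, hC0, h]
  · nlinarith [hC, hS, hS0]

lemma quadpos_gt (hJ : 1 ≤ J ^ 2) (hC : c1pos J < C) :
    0 < 2 * C ^ 2 - 3 * C + 1 - J ^ 2 := by
  have hS := sqS_sq J
  have hS0 : 0 ≤ Real.sqrt (8 * J ^ 2 + 1) := Real.sqrt_nonneg _
  unfold c1pos at hC
  nlinarith [hC, hS, hS0]

lemma P_anti_neg1 : StrictAntiOn (fun C => P q J (-1) C) (Icc 0 (c1neg J)) := by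
  apply strictAntiOn_of_deriv_neg (convex_Icc _ _) contP.continuousOn
  intro x hx
  rw [interior_Icc] at hx
  rw [(hasDerivAt_P (q := q) (J := J) (e := -1) (C := x)).deriv]
  have h := quadneg_lt hx.1 hx.2
  have hx0 := hx.1
  nlinarith [h, hx0]

lemma P_mono_neg1 (hJ : 1 ≤ J ^ 2) : StrictMonoOn (fun C => P q J (-1) C) (Ici (c1neg J)) := by
  apply strictMonoOn_of_deriv_pos (convex_Ici _) contP.continuousOn
  intro x hx
  rw [interior_Ici] at hx
  rw [(hasDerivAt_P (q := q) (J := J) (e := -1) (C := x)).deriv]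
  have h := quadneg_gt hJ hx
  have hx0 : 0 < x := lt_of_le_of_lt (c1neg_nonneg hJ) hx
  nlinarith [h, hx0]

lemma P_anti_pos1 (hJ : 1 ≤ J ^ 2) : StrictAntiOn (fun C => P q J 1 C) (Icc 0 (c1pos J)) := by
  apply strictAntiOn_of_deriv_neg (convex_Icc _ _) contP.continuousOn
  intro x hx
  rw [interior_Icc] at hx
  rw [(hasDerivAt_P (q := q) (J := J) (e := 1) (C := x)).deriv]
  have h := quadpos_lt hJ hx.1 hx.2
  nlinarith [h, hx.1]

lemma P_mono_pos1 (hJ : 1 ≤ J ^ 2) : StrictMonoOn (fun C => P q J 1 C) (Ici (c1pos J)) := by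
  apply strictMonoOn_of_deriv_pos (convex_Ici _) contP.continuousOn
  intro x hx
  rw [interior_Ici] at hx
  rw [(hasDerivAt_P (q := q) (J := J) (e := 1) (C := x)).deriv]
  have h := quadpos_gt hJ hx
  have hx0 : 0 < x := lt_of_lt_of_le (by linarith [c1pos_ge hJ] : (0:ℝ) < c1pos J) (le_of_lt hx)
  nlinarith [h, hx0]

/-- Pigeonhole: a function injective on each of two sets cannot have three distinct
zeros inside their union. -/
lemma three_roots {f : ℝ → ℝ} {A B : Set ℝ} (hA : Set.InjOn f A) (hB : Set.InjOn f B)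
    {a b c : ℝ} (ha : a ∈ A ∪ B) (hb : b ∈ A ∪ B) (hc : c ∈ A ∪ B)
    (fa : f a = 0) (fb : f b = 0) (fc : f c = 0)
    (hab : a ≠ b) (hac : a ≠ c) (hbc : b ≠ c) : False := by
  rcases ha with ha | ha <;> rcases hb with hb | hb <;> rcases hc with hc | hc
  · exact hab (hA ha hb (by rw [fa, fb]))
  · exact hab (hA ha hb (by rw [fa, fb]))
  · exact hac (hA ha hc (by rw [fa, fc]))
  · exact hbc (hB hb hc (by rw [fb, fc]))
  · exact hbc (hA hb hc (by rw [fb, fc]))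
  · exact hac (hB ha hc (by rw [fa, fc]))
  · exact hab (hB ha hb (by rw [fa, fb]))
  · exact hab (hB ha hb (by rw [fa, fb]))

/-! ### Counting the roots -/

lemma rset_J0_pos1 (hq1 : q < 1) : rset q 0 1 = {1} := by
  ext C
  simp only [rset, Set.mem_setOf_eq, Set.mem_singleton_iff, zero_mul, sub_eq_zero]
  exact ⟨fun h => h.2, fun h => ⟨h ▸ hq1, h⟩⟩

lemma rset_neg1_Jnonpos (hq0 : 0 < q) (hJ : J ≤ 0) : rset q J (-1) = ∅ := by
  apply Set.eq_empty_iff_forall_notMem.2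
  rintro C ⟨hC, heq⟩
  have hs := aux_sqrt_pos hq0 hC
  have h1 : J * Real.sqrt (1 - q ^ 2 / C ^ 2) ≤ 0 :=
    mul_nonpos_of_nonpos_of_nonneg hJ hs.le
  have h2 : 0 < C - (-1) := by linarith [hq0.trans hC]
  linarith [heq ▸ h2]

lemma rset_pos1_Jpos (hq0 : 0 < q) (hq1 : q < 1) (hJ : 1 ≤ J) :
    ∃ a, rset q J 1 = {a} := by
  have hJ2 : 1 ≤ J ^ 2 := by nlinarith
  have hP1 : P q J 1 1 < 0 := by
    have h1 : 0 < 1 - q ^ 2 := by nlinarith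
    have h2 := mul_pos (lt_of_lt_of_le one_pos hJ2) h1
    unfold P; nlinarith [h2]
  have hPX : 0 < P q J 1 (J + 2) := by unfold P; nlinarith [sq_nonneg q, sq_nonneg (J+2)]
  obtain ⟨a, haI, haP⟩ : ∃ a ∈ Ioo (1:ℝ) (J + 2), P q J 1 a = 0 := by
    have h := intermediate_value_Ioo (by linarith : (1:ℝ) ≤ J + 2)
      (contP (q := q) (J := J) (e := 1)).continuousOn (a := 1) (b := J + 2)
    exact h ⟨hP1, hPX⟩
  have hqa : q < a := by linarith [haI.1]
  have hamem : a ∈ rset q J 1 :=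
    ⟨hqa, (eq_iff_pos hq0 (by linarith) hqa).2 ⟨by linarith [haI.1], haP⟩⟩
  -- every root bigger than 1 lies in `Ici (c1pos J)`
  have hroot : ∀ x, 1 < x → P q J 1 x = 0 → c1pos J ≤ x := by
    intro x hx hPx
    by_contra hlt
    push_neg at hlt
    have h1m : (1:ℝ) ∈ Icc 0 (c1pos J) := ⟨by norm_num, by linarith [c1pos_ge hJ2]⟩
    have hxm : x ∈ Icc 0 (c1pos J) := ⟨by linarith, hlt.le⟩
    have h2 : P q J 1 x < P q J 1 1 := P_anti_pos1 (q := q) hJ2 h1m hxm hx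
    rw [hPx] at h2
    linarith
  refine ⟨a, Set.eq_singleton_iff_unique_mem.2 ⟨hamem, ?_⟩⟩
  rintro c ⟨hqc, hceq⟩
  obtain ⟨hsig, hPc⟩ := (eq_iff_pos hq0 (by linarith : (0:ℝ) ≤ J) hqc).1 hceq
  have hc1 : 1 < c := by
    have hs := aux_sqrt_pos hq0 hqc
    nlinarith [hceq, hs, hJ]
  exact (P_mono_pos1 (q := q) hJ2).injOn (hroot c hc1 hPc) (hroot a haI.1 haP)
    (show P q J 1 c = P q J 1 a by rw [hPc, haP])

lemma rset_pos1_Jneg (hq0 : 0 < q) (hq1 : q < 1) (hJ : J ≤ -1) :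
    ∃ a, rset q J 1 = {a} := by
  have hJ2 : 1 ≤ J ^ 2 := by nlinarith
  have hP1 : P q J 1 1 < 0 := by
    have h1 : 0 < 1 - q ^ 2 := by nlinarith
    have h2 := mul_pos (lt_of_lt_of_le one_pos hJ2) h1
    unfold P; nlinarith [h2]
  have hPq : 0 < P q J 1 q := by
    have h : P q J 1 q = q ^ 2 * (q - 1) ^ 2 := by unfold P; ring
    rw [h]
    have h1 : 0 < (q - 1) ^ 2 := by nlinarith
    have h2 : 0 < q ^ 2 := by positivity
    exact mul_pos h2 h1
  obtain ⟨a, haI, haP⟩ : ∃ a ∈ Ioo q 1, P q J 1 a = 0 := by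
    have h := intermediate_value_Ioo' (le_of_lt hq1)
      (contP (q := q) (J := J) (e := 1)).continuousOn (a := q) (b := 1)
    exact h ⟨hP1, hPq⟩
  have hamem : a ∈ rset q J 1 :=
    ⟨haI.1, (eq_iff_neg hq0 (by linarith) haI.1).2 ⟨by linarith [haI.2], haP⟩⟩
  refine ⟨a, Set.eq_singleton_iff_unique_mem.2 ⟨hamem, ?_⟩⟩
  rintro c ⟨hqc, hceq⟩
  obtain ⟨hsig, hPc⟩ := (eq_iff_neg hq0 (by linarith : J ≤ 0) hqc).1 hceq
  have hcm : c ∈ Icc 0 (c1pos J) := ⟨by linarith [hq0.trans hqc],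
    by linarith [c1pos_ge hJ2]⟩
  have ham : a ∈ Icc 0 (c1pos J) := ⟨by linarith [hq0.trans haI.1],
    by linarith [c1pos_ge hJ2, haI.2]⟩
  exact (P_anti_pos1 (q := q) hJ2).injOn hcm ham
    (show P q J 1 c = P q J 1 a by rw [hPc, haP])

lemma rset_neg1_Jpos (hq0 : 0 < q) (hq2 : q ^ 2 < (414 - 66 * Real.sqrt 33) / 256)
    (hJ : 2 ≤ J) : ∃ a b, a ≠ b ∧ rset q J (-1) = {a, b} := by
  have hJ2 : 1 ≤ J ^ 2 := by nlinarith
  set s33 := Real.sqrt 33 with hs33def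
  have h33 : s33 ^ 2 = 33 := Real.sq_sqrt (by norm_num)
  have h33n : 0 ≤ s33 := Real.sqrt_nonneg _
  have h33l : 5.7 < s33 := by nlinarith
  have h33u : s33 < 5.75 := by nlinarith
  set C0 : ℝ := (s33 - 3) / 4 with hC0def
  have hC00 : 0 < C0 := by rw [hC0def]; linarith
  have hqC0 : q < C0 := by nlinarith
  have hq1 : q < 1 := by nlinarith
  have hPq : 0 < P q J (-1) q := by
    have h : P q J (-1) q = q ^ 2 * (q + 1) ^ 2 := by unfold P; ring
    rw [h]; positivity
  have hkey : C0 ^ 2 * (C0 + 1) ^ 2 - 4 * C0 ^ 2 = -(414 - 66 * s33) / 64 := by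
    rw [hC0def]
    linear_combination ((s33 ^ 2 - 4 * s33 - 33) / 256) * h33
  have hPC0 : P q J (-1) C0 < 0 := by
    have h4 : 4 ≤ J ^ 2 := by nlinarith
    have hd : 0 < C0 ^ 2 - q ^ 2 := by nlinarith
    unfold P
    nlinarith [hkey, h4, hd, hq2]
  have hPX : 0 < P q J (-1) (J + 1) := by
    unfold P
    nlinarith [sq_nonneg q, sq_nonneg (J + 1), hq0, hJ]
  have hC0X : C0 < J + 1 := by rw [hC0def]; nlinarith
  obtain ⟨a, haI, haP⟩ : ∃ a ∈ Ioo q C0, P q J (-1) a = 0 := by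
    have h := intermediate_value_Ioo' (le_of_lt hqC0)
      (contP (q := q) (J := J) (e := -1)).continuousOn (a := q) (b := C0)
    exact h ⟨hPC0, hPq⟩
  obtain ⟨b, hbI, hbP⟩ : ∃ b ∈ Ioo C0 (J + 1), P q J (-1) b = 0 := by
    have h := intermediate_value_Ioo (le_of_lt hC0X)
      (contP (q := q) (J := J) (e := -1)).continuousOn (a := C0) (b := J + 1)
    exact h ⟨hPC0, hPX⟩
  have hJ0 : (0:ℝ) ≤ J := by linarith
  have hamem : a ∈ rset q J (-1) :=
    ⟨haI.1, (eq_iff_pos hq0 hJ0 haI.1).2 ⟨by linarith [hq0.trans haI.1], haP⟩⟩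
  have hqb : q < b := lt_trans hqC0 hbI.1
  have hbmem : b ∈ rset q J (-1) :=
    ⟨hqb, (eq_iff_pos hq0 hJ0 hqb).2 ⟨by linarith [hq0.trans hqb], hbP⟩⟩
  have hab : a ≠ b := ne_of_lt (lt_trans haI.2 hbI.1)
  refine ⟨a, b, hab, ?_⟩
  ext c
  constructor
  · rintro ⟨hqc, hceq⟩
    obtain ⟨_, hPc⟩ := (eq_iff_pos hq0 hJ0 hqc).1 hceq
    by_contra hne
    simp only [Set.mem_insert_iff, Set.mem_singleton_iff] at hne
    push_neg at hne
    have hmem : ∀ x : ℝ, q < x → x ∈ Icc 0 (c1neg J) ∪ Ici (c1neg J) := by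
      intro x hx
      rcases le_total x (c1neg J) with h | h
      · exact Or.inl ⟨by linarith [hq0.trans hx], h⟩
      · exact Or.inr h
    exact three_roots (P_anti_neg1 (q := q)).injOn (P_mono_neg1 (q := q) hJ2).injOn
      (hmem a haI.1) (hmem b hqb) (hmem c hqc) haP hbP hPc
      hab (fun h => hne.1 h.symm) (fun h => hne.2 h.symm)
  · rintro (rfl | rfl)
    · exact hamem
    · exact hbmem

/-- Consolidated root count. -/
theorem rset_spec (hq0 : 0 < q) (hq1 : q < 1)
    (hq2 : q ^ 2 < (414 - 66 * Real.sqrt 33) / 256)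
    {J e : ℝ} (he : e = 1 ∨ e = -1) (hJint : J = 0 ∨ 2 ≤ J ∨ J ≤ -2) :
    (rset q J e).Finite ∧
      (rset q J e).ncard = (if e = 1 then 1 else if 2 ≤ J then 2 else 0) := by
  rcases he with rfl | rfl
  · simp only [if_pos rfl]
    rcases hJint with rfl | hJ | hJ
    · rw [rset_J0_pos1 hq1]
      exact ⟨Set.finite_singleton _, Set.ncard_singleton _⟩
    · obtain ⟨a, ha⟩ := rset_pos1_Jpos hq0 hq1 (by linarith)
      rw [ha]
      exact ⟨Set.finite_singleton _, Set.ncard_singleton _⟩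
    · obtain ⟨a, ha⟩ := rset_pos1_Jneg hq0 hq1 (by linarith)
      rw [ha]
      exact ⟨Set.finite_singleton _, Set.ncard_singleton _⟩
  · have hne : (-1 : ℝ) ≠ 1 := by norm_num
    simp only [if_neg hne]
    rcases hJint with rfl | hJ | hJ
    · rw [rset_neg1_Jnonpos hq0 le_rfl, if_neg (by norm_num : ¬ (2:ℝ) ≤ 0)]
      exact ⟨Set.finite_empty, Set.ncard_empty _⟩
    · obtain ⟨a, b, hab, hset⟩ := rset_neg1_Jpos hq0 hq2 hJ
      rw [hset, if_pos hJ]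
      exact ⟨(Set.finite_singleton b).insert a, Set.ncard_pair hab⟩
    · rw [rset_neg1_Jnonpos hq0 (by linarith), if_neg (by intro h; linarith)]
      exact ⟨Set.finite_empty, Set.ncard_empty _⟩

/-! ### Recovering an angle from its sine and the sign of its cosine -/

/-- The unique angle in `(-π, π]` with prescribed sine and sign of cosine. -/
def recover (b : Bool) (s : ℝ) : ℝ :=
  if b then Real.arcsin s
  else if 0 ≤ s then π - Real.arcsin s else -π - Real.arcsin s

lemma recover_mem_Ioc (b : Bool) (s : ℝ) : recover b s ∈ Set.Ioc (-π) π := by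
  have h1 := Real.neg_pi_div_two_le_arcsin s
  have h2 := Real.arcsin_le_pi_div_two s
  have hpi := Real.pi_pos
  unfold recover
  rcases b with _ | _
  · simp only [Bool.false_eq_true, if_false]
    rcases le_or_gt 0 s with hs | hs
    · have h3 : 0 ≤ Real.arcsin s := Real.arcsin_nonneg.2 hs
      rw [if_pos hs]
      constructor <;> linarith
    · have h3 : Real.arcsin s < 0 := Real.arcsin_lt_zero.2 hs
      rw [if_neg (not_le.2 hs)]
      constructor <;> linarith
  · simp only [if_true]
    constructor <;> linarith

lemma sin_neg_pi_sub (x : ℝ) : Real.sin (-π - x) = Real.sin x := by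
  have h : -π - x = -(x + π) := by ring
  rw [h, Real.sin_neg, Real.sin_add_pi, neg_neg]

lemma cos_neg_pi_sub (x : ℝ) : Real.cos (-π - x) = -Real.cos x := by
  have h : -π - x = -(x + π) := by ring
  rw [h, Real.cos_neg, Real.cos_add_pi]

lemma sin_recover (b : Bool) {s : ℝ} (h1 : -1 ≤ s) (h2 : s ≤ 1) :
    Real.sin (recover b s) = s := by
  unfold recover
  rcases b with _ | _
  · simp only [Bool.false_eq_true, if_false]
    rcases le_or_gt 0 s with hs | hs
    · rw [if_pos hs, Real.sin_pi_sub, Real.sin_arcsin h1 h2]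
    · rw [if_neg (not_le.2 hs), sin_neg_pi_sub, Real.sin_arcsin h1 h2]
  · simp only [if_true]
    exact Real.sin_arcsin h1 h2

lemma cos_recover (b : Bool) (s : ℝ) :
    Real.cos (recover b s) = (if b then 1 else -1) * Real.sqrt (1 - s ^ 2) := by
  unfold recover
  rcases b with _ | _
  · simp only [Bool.false_eq_true, if_false]
    rcases le_or_gt 0 s with hs | hs
    · rw [if_pos hs, Real.cos_pi_sub, Real.cos_arcsin]
      ring
    · rw [if_neg (not_le.2 hs), cos_neg_pi_sub, Real.cos_arcsin]
      ring
  · simp only [if_true]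
    rw [Real.cos_arcsin]
    ring

lemma recover_retract {x : ℝ} (hx : x ∈ Set.Ioc (-π) π) (hc : Real.cos x ≠ 0) :
    recover (decide (0 < Real.cos x)) (Real.sin x) = x := by
  have hpi := Real.pi_pos
  rcases lt_trichotomy (Real.cos x) 0 with hcc | hcc | hcc
  · rw [decide_eq_false (not_lt.2 hcc.le)]
    unfold recover
    simp only [Bool.false_eq_true, if_false]
    rcases le_or_gt 0 (Real.sin x) with hs | hs
    · rw [if_pos hs]
      -- here x ∈ (π/2, π]
      have hx0 : 0 < x := by
        by_contra h
        push_neg at h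
        rcases lt_or_eq_of_le h with h' | h'
        · exact absurd (Real.sin_neg_of_neg_of_neg_pi_lt h' hx.1) (not_lt.2 hs)
        · rw [h'] at hcc; rw [Real.cos_zero] at hcc; linarith
      have hx2 : π / 2 < x := by
        by_contra h
        push_neg at h
        exact absurd (Real.cos_nonneg_of_mem_Icc ⟨by linarith, h⟩) (not_le.2 hcc)
      have hy : Real.arcsin (Real.sin x) = π - x := by
        rw [show Real.sin x = Real.sin (π - x) by rw [Real.sin_pi_sub]]
        exact Real.arcsin_sin (by linarith [hx.2]) (by linarith)
      rw [hy]; ring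
    · rw [if_neg (not_le.2 hs)]
      -- here x ∈ (-π, -π/2)
      have hx0 : x < 0 := by
        by_contra h
        push_neg at h
        exact absurd (Real.sin_nonneg_of_nonneg_of_le_pi h hx.2) (not_le.2 hs)
      have hx2 : x < -(π / 2) := by
        by_contra h
        push_neg at h
        exact absurd (Real.cos_nonneg_of_mem_Icc ⟨h, by linarith⟩) (not_le.2 hcc)
      have hy : Real.arcsin (Real.sin x) = -π - x := by
        rw [show Real.sin x = Real.sin (-π - x) by rw [sin_neg_pi_sub]]
        exact Real.arcsin_sin (by linarith) (by linarith [hx.1])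
      rw [hy]; ring
  · exact absurd hcc hc
  · rw [decide_eq_true hcc]
    unfold recover
    simp only [if_true]
    have hx1 : -(π / 2) < x := by
      by_contra h
      push_neg at h
      have : Real.cos x ≤ 0 := by
        rw [← Real.cos_neg]
        exact Real.cos_nonpos_of_pi_div_two_le_of_le (by linarith) (by linarith [hx.1])
      linarith
    have hx2 : x < π / 2 := by
      by_contra h
      push_neg at h
      have : Real.cos x ≤ 0 :=
        Real.cos_nonpos_of_pi_div_two_le_of_le h (by linarith [hx.2])
      linarith
    exact Real.arcsin_sin hx1.le hx2.le

/-! ### The specific model: `n = 2m+1` oscillators -/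

/-- The (rescaled) natural frequencies. -/
def w (m : ℕ) (q : ℝ) (ν : Fin (2*m+1)) : ℝ :=
  if (ν:ℕ) < m then q else if (ν:ℕ) < 2*m then -q else 0

/-- The distinguished last index. -/
def lastI (m : ℕ) : Fin (2*m+1) := ⟨2*m, by omega⟩

/-- The equilibrium set of the specific model. -/
def S (m : ℕ) (q : ℝ) : Set (Fin (2*m+1) → ℝ) :=
  kuramotoEquilibria (2*m+1)
    (fun μ => if (μ:ℕ) < m then ((2*m+1 : ℕ) : ℝ) * q
      else if (μ:ℕ) < 2*m then -(((2*m+1 : ℕ) : ℝ) * q) else 0)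
    (fun _ => ((2*m+1 : ℕ) : ℝ))

lemma sum_ite_fin (m : ℕ) (x y z : ℝ) :
    (∑ ν : Fin (2*m+1), (if (ν:ℕ) < m then x else if (ν:ℕ) < 2*m then y else z))
      = m * x + m * y + z := by
  rw [Fin.sum_univ_eq_sum_range (fun i => if i < m then x else if i < 2*m then y else z)
    (2*m+1)]
  rw [Finset.range_eq_Ico]
  rw [← Finset.sum_Ico_consecutive _ (Nat.zero_le m) (by omega : m ≤ 2*m+1)]
  rw [← Finset.sum_Ico_consecutive _ (by omega : m ≤ 2*m) (by omega : 2*m ≤ 2*m+1)]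
  have h1 : (∑ i ∈ Finset.Ico 0 m, (if i < m then x else if i < 2*m then y else z))
      = m * x := by
    calc (∑ i ∈ Finset.Ico 0 m, (if i < m then x else if i < 2*m then y else z))
        = ∑ _i ∈ Finset.Ico 0 m, x :=
          Finset.sum_congr rfl (fun i hi => by
            rw [Finset.mem_Ico] at hi; rw [if_pos hi.2])
      _ = m * x := by rw [Finset.sum_const, Nat.card_Ico, Nat.sub_zero, nsmul_eq_mul]
  have h2 : (∑ i ∈ Finset.Ico m (2*m), (if i < m then x else if i < 2*m then y else z))
      = m * y := by
    calc (∑ i ∈ Finset.Ico m (2*m), (if i < m then x else if i < 2*m then y else z))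
        = ∑ _i ∈ Finset.Ico m (2*m), y :=
          Finset.sum_congr rfl (fun i hi => by
            rw [Finset.mem_Ico] at hi; rw [if_neg (by omega), if_pos hi.2])
      _ = m * y := by
          rw [Finset.sum_const, Nat.card_Ico, nsmul_eq_mul]
          congr 1
          have : 2*m - m = m := by omega
          rw [this]
  have h3 : (∑ i ∈ Finset.Ico (2*m) (2*m+1), (if i < m then x else if i < 2*m then y else z))
      = z := by
    rw [Finset.sum_Ico_succ_top (le_refl (2*m)), Finset.Ico_self, Finset.sum_empty, zero_add]
    rw [if_neg (by omega), if_neg (by omega)]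
  rw [h1, h2, h3]
  ring

/-- Membership characterisation of the equilibrium set. -/
lemma mem_S_iff {m : ℕ} {q : ℝ} (θ : Fin (2*m+1) → ℝ) :
    θ ∈ S m q ↔ (∀ ν, θ ν ∈ Set.Ioc (-π) π) ∧ (∑ μ, Real.sin (θ μ)) = 0 ∧
      0 ≤ (∑ μ, Real.cos (θ μ)) ∧
      ∀ ν, w m q ν = (∑ μ, Real.cos (θ μ)) * Real.sin (θ ν) := by
  have hN : (0:ℝ) < ((2*m+1 : ℕ) : ℝ) := by positivity
  set N : ℝ := ((2*m+1 : ℕ) : ℝ) with hNdef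
  have hNe : N ≠ 0 := ne_of_gt hN
  unfold S kuramotoEquilibria
  simp only [Set.mem_setOf_eq]
  have hω : ∀ ν : Fin (2*m+1),
      (if (ν:ℕ) < m then N * q else if (ν:ℕ) < 2*m then -(N * q) else 0) = N * w m q ν := by
    intro ν; unfold w; split_ifs <;> ring
  have hexp : ∀ x : ℝ, (∑ μ, Real.sin (θ μ)) = 0 →
      (∑ μ, Real.sin (x - θ μ)) = (∑ μ, Real.cos (θ μ)) * Real.sin x := by
    intro x h0
    simp only [Real.sin_sub]
    rw [Finset.sum_sub_distrib, ← Finset.mul_sum, ← Finset.mul_sum, h0, mul_zero, sub_zero]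
    ring
  have hsum2 : ∀ ν : Fin (2*m+1),
      (1 / N) * (∑ μ, N * N * Real.sin (θ ν - θ μ)) = N * ∑ μ, Real.sin (θ ν - θ μ) := by
    intro ν
    rw [← Finset.mul_sum]
    field_simp
  constructor
  · rintro ⟨hrange, heq, hs, hc⟩
    rw [← Finset.mul_sum] at hs hc
    have hs' : (∑ μ, Real.sin (θ μ)) = 0 := (mul_eq_zero.1 hs).resolve_left hNe
    have hc' : 0 ≤ ∑ μ, Real.cos (θ μ) := by nlinarith [hc, hN]
    refine ⟨hrange, hs', hc', fun ν => ?_⟩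
    have h1 := heq ν
    rw [hsum2 ν, hexp (θ ν) hs', hω ν] at h1
    exact mul_left_cancel₀ hNe h1
  · rintro ⟨hrange, hs', hc', hw'⟩
    refine ⟨hrange, fun ν => ?_, ?_, ?_⟩
    · rw [hsum2 ν, hexp (θ ν) hs', hω ν, hw' ν]
    · rw [← Finset.mul_sum, hs', mul_zero]
    · rw [← Finset.mul_sum]
      exact mul_nonneg hN.le hc'

/-! ### Fibers over sign patterns -/

/-- The sign pattern of an equilibrium: the set of indices where the cosine is positive. -/
def pat {m : ℕ} (θ : Fin (2*m+1) → ℝ) : Finset (Fin (2*m+1)) :=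
  Finset.univ.filter (fun ν => 0 < Real.cos (θ ν))

/-- The signed count `J` associated to a pattern. -/
def Jv (m : ℕ) (s : Finset (Fin (2*m+1))) : ℝ := 2 * ((s.erase (lastI m)).card : ℝ) - 2 * m

/-- The sign `ε` associated to a pattern. -/
def ev (m : ℕ) (s : Finset (Fin (2*m+1))) : ℝ := if lastI m ∈ s then 1 else -1

/-- The fiber of the pattern map. -/
def fib (m : ℕ) (q : ℝ) (s : Finset (Fin (2*m+1))) : Set (Fin (2*m+1) → ℝ) :=
  {θ | θ ∈ S m q ∧ pat θ = s}

lemma card_erase_le (m : ℕ) (s : Finset (Fin (2*m+1))) : (s.erase (lastI m)).card ≤ 2*m := by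
  have h1 : s.erase (lastI m) ⊆ Finset.univ.erase (lastI m) :=
    Finset.erase_subset_erase _ (Finset.subset_univ s)
  have h2 := Finset.card_le_card h1
  rwa [Finset.card_erase_of_mem (Finset.mem_univ _), Finset.card_univ, Fintype.card_fin] at h2

/-- Summing a function which is `±t` off the last index and `±1` there. -/
lemma sum_cos_eq {m : ℕ} (s : Finset (Fin (2*m+1))) (t : ℝ) (g : Fin (2*m+1) → ℝ)
    (hg : ∀ ν, ν ≠ lastI m → g ν = (if ν ∈ s then t else -t))
    (hlast : g (lastI m) = (if lastI m ∈ s then 1 else -1)) :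
    (∑ ν, g ν) = Jv m s * t + ev m s := by
  rw [← Finset.sum_erase_add Finset.univ g (Finset.mem_univ (lastI m))]
  have h1 : (∑ ν ∈ Finset.univ.erase (lastI m), g ν) = Jv m s * t := by
    rw [Finset.sum_congr rfl (fun ν hν => hg ν (Finset.ne_of_mem_erase hν))]
    rw [Finset.sum_ite]
    have e1 : (Finset.univ.erase (lastI m)).filter (fun ν => ν ∈ s) = s.erase (lastI m) := by
      ext ν
      simp only [Finset.mem_filter, Finset.mem_erase, Finset.mem_univ, true_and, and_comm]
    have ecard : (Finset.univ.erase (lastI m)).card = 2*m := by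
      rw [Finset.card_erase_of_mem (Finset.mem_univ _), Finset.card_univ, Fintype.card_fin]
      omega
    have ecard2 := Finset.card_filter_add_card_filter_not
      (s := Finset.univ.erase (lastI m)) (p := fun ν => ν ∈ s)
    rw [e1] at ecard2
    rw [e1, Finset.sum_const, Finset.sum_const, nsmul_eq_mul, nsmul_eq_mul]
    have e2 : ((Finset.univ.erase (lastI m)).filter (fun ν => ¬ ν ∈ s)).card
        = 2*m - (s.erase (lastI m)).card := by omega
    rw [e2]
    have hle := card_erase_le m s
    unfold Jv
    push_cast [Nat.cast_sub hle]
    ring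
  rw [h1, hlast]
  unfold ev
  split_ifs <;> ring

/-- In an equilibrium, `C = Σ cos θ` exceeds `q`. -/
lemma C_gt_q {m : ℕ} {q : ℝ} {θ : Fin (2*m+1) → ℝ} (hm : 1 ≤ m) (hq0 : 0 < q) (hq1 : q < 1)
    (hθ : θ ∈ S m q) : q < ∑ μ, Real.cos (θ μ) := by
  obtain ⟨hrange, hs, hc, hw⟩ := (mem_S_iff θ).1 hθ
  set C := ∑ μ, Real.cos (θ μ) with hCdef
  have hiv : (0:ℕ) < 2*m+1 := by omega
  have h1 := hw ⟨0, hiv⟩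
  have h0 : w m q ⟨0, hiv⟩ = q := by
    unfold w; simp only [Fin.val_mk]; rw [if_pos (by omega)]
  rw [h0] at h1
  have hsin1 : Real.sin (θ ⟨0, hiv⟩) ≤ 1 := Real.sin_le_one _
  have hC0 : 0 < C := by
    rcases lt_or_eq_of_le hc with h | h
    · exact h
    · exfalso; rw [← h] at h1; simp at h1; linarith
  have hCq : q ≤ C := by nlinarith
  rcases lt_or_eq_of_le hCq with h | h
  · exact h
  exfalso
  -- If C = q, all cosines off the last index vanish and `C = ±1`.
  have hCne : C ≠ 0 := ne_of_gt hC0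
  have hcos : ∀ ν : Fin (2*m+1), ν ≠ lastI m → Real.cos (θ ν) = 0 := by
    intro ν hν
    have h2 := hw ν
    have hsin : Real.sin (θ ν) = 1 ∨ Real.sin (θ ν) = -1 := by
      unfold w at h2
      have hν' : (ν:ℕ) ≠ 2*m := fun hh => hν (Fin.ext hh)
      split_ifs at h2 with h3 h4
      · left
        have h5 : C * (Real.sin (θ ν) - 1) = 0 := by linear_combination h - h2
        rcases mul_eq_zero.1 h5 with h6 | h6
        · exact absurd h6 hCne
        · linarith
      · right
        have h5 : C * (Real.sin (θ ν) + 1) = 0 := by linear_combination - h2 - h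
        rcases mul_eq_zero.1 h5 with h6 | h6
        · exact absurd h6 hCne
        · linarith
      · exact absurd (by omega : (ν:ℕ) = 2*m) hν'
    have hpyth := Real.sin_sq_add_cos_sq (θ ν)
    have : Real.cos (θ ν) ^ 2 = 0 := by rcases hsin with h5 | h5 <;> rw [h5] at hpyth <;> nlinarith
    exact pow_eq_zero_iff (n := 2) (by norm_num) |>.1 this
  have hlastsin : Real.sin (θ (lastI m)) = 0 := by
    have h2 := hw (lastI m)
    have h3 : w m q (lastI m) = 0 := by
      unfold w lastI
      simp only [Fin.val_mk]
      rw [if_neg (by omega), if_neg (by omega)]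
    rw [h3] at h2
    rcases mul_eq_zero.1 h2.symm with h4 | h4
    · exact absurd h4 hCne
    · exact h4
  have hlastcos : Real.cos (θ (lastI m)) = 1 ∨ Real.cos (θ (lastI m)) = -1 := by
    have hpyth := Real.sin_sq_add_cos_sq (θ (lastI m))
    rw [hlastsin] at hpyth
    have h5 : Real.cos (θ (lastI m)) ^ 2 = 1 := by nlinarith
    have h6 : |Real.cos (θ (lastI m))| = 1 := by
      rw [← Real.sqrt_sq_eq_abs, h5, Real.sqrt_one]
    rcases abs_eq (by norm_num : (0:ℝ) ≤ 1) |>.1 h6 with h7 | h7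
    · exact Or.inl h7
    · exact Or.inr h7
  have hsum : C = Real.cos (θ (lastI m)) := by
    rw [hCdef]
    apply Finset.sum_eq_single (lastI m)
    · intro b _ hb
      exact hcos b hb
    · intro hb
      exact absurd (Finset.mem_univ _) hb
  rcases hlastcos with h7 | h7 <;> rw [h7] at hsum <;> linarith

lemma w_sq {m : ℕ} {q : ℝ} (ν : Fin (2*m+1)) (hν : ν ≠ lastI m) :
    (w m q ν) ^ 2 = q ^ 2 := by
  have hν' : (ν:ℕ) ≠ 2*m := fun hh => hν (Fin.ext hh)
  have hlt := ν.isLt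
  unfold w
  split_ifs with h1 h2
  · rfl
  · ring
  · omega

lemma w_last (m : ℕ) (q : ℝ) : w m q (lastI m) = 0 := by
  unfold w lastI
  simp only [Fin.val_mk]
  rw [if_neg (by omega), if_neg (by omega)]

lemma w_abs_le {m : ℕ} {q : ℝ} (hq0 : 0 ≤ q) (ν : Fin (2*m+1)) : |w m q ν| ≤ q := by
  unfold w
  split_ifs
  · rw [abs_of_nonneg hq0]
  · rw [abs_neg, abs_of_nonneg hq0]
  · rw [abs_zero]; exact hq0

/-- The sum-of-cosines map sends the fiber into the root set. -/
lemma maps_fib {m : ℕ} {q : ℝ} (hm : 1 ≤ m) (hq0 : 0 < q) (hq1 : q < 1)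
    {θ : Fin (2*m+1) → ℝ} (hθ : θ ∈ S m q) :
    (∑ μ, Real.cos (θ μ)) ∈ rset q (Jv m (pat θ)) (ev m (pat θ)) := by
  obtain ⟨hrange, hs, hc, hw⟩ := (mem_S_iff θ).1 hθ
  set C := ∑ μ, Real.cos (θ μ) with hCdef
  have hqC : q < C := C_gt_q hm hq0 hq1 hθ
  have hC0 : 0 < C := hq0.trans hqC
  refine ⟨hqC, ?_⟩
  set t := Real.sqrt (1 - q ^ 2 / C ^ 2) with htdef
  have ht0 : 0 < t := aux_sqrt_pos hq0 hqC
  have hsin : ∀ ν, Real.sin (θ ν) = w m q ν / C := by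
    intro ν
    rw [hw ν, mul_div_cancel_left₀ _ (ne_of_gt hC0)]
  have hcos_abs : ∀ ν, ν ≠ lastI m → |Real.cos (θ ν)| = t := by
    intro ν hν
    have hpyth := Real.sin_sq_add_cos_sq (θ ν)
    have h1 : Real.cos (θ ν) ^ 2 = 1 - q ^ 2 / C ^ 2 := by
      rw [hsin ν, div_pow, w_sq ν hν] at hpyth
      linarith
    rw [← Real.sqrt_sq_eq_abs, h1]
  have hcos_last : |Real.cos (θ (lastI m))| = 1 := by
    have hpyth := Real.sin_sq_add_cos_sq (θ (lastI m))
    rw [hsin (lastI m), w_last, zero_div] at hpyth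
    have h1 : Real.cos (θ (lastI m)) ^ 2 = 1 := by nlinarith
    rw [← Real.sqrt_sq_eq_abs, h1, Real.sqrt_one]
  have hmem : ∀ ν, (ν ∈ pat θ) ↔ 0 < Real.cos (θ ν) := by
    intro ν; unfold pat; simp only [Finset.mem_filter, Finset.mem_univ, true_and]
  have hsum := sum_cos_eq (pat θ) t (fun ν => Real.cos (θ ν))
    (fun ν hν => by
      rcases le_or_gt (Real.cos (θ ν)) 0 with hcc | hcc
      · rw [if_neg (fun hmm => absurd ((hmem ν).1 hmm) (not_lt.2 hcc))]
        rw [← hcos_abs ν hν, abs_of_nonpos hcc, neg_neg]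
      · rw [if_pos ((hmem ν).2 hcc)]
        rw [← hcos_abs ν hν, abs_of_pos hcc])
    (by
      rcases le_or_gt (Real.cos (θ (lastI m))) 0 with hcc | hcc
      · rw [if_neg (fun hmm => absurd ((hmem (lastI m)).1 hmm) (not_lt.2 hcc))]
        rw [← hcos_last, abs_of_nonpos hcc, neg_neg]
      · rw [if_pos ((hmem (lastI m)).2 hcc)]
        rw [← hcos_last, abs_of_pos hcc])
  rw [← hCdef] at hsum
  rw [hsum]
  ring

/-- Injectivity of the sum-of-cosines map on a fiber. -/
lemma inj_fib {m : ℕ} {q : ℝ} (hm : 1 ≤ m) (hq0 : 0 < q) (hq1 : q < 1)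
    (s : Finset (Fin (2*m+1))) :
    Set.InjOn (fun θ => ∑ μ, Real.cos (θ μ)) (fib m q s) := by
  rintro θ ⟨hθ, hpθ⟩ θ' ⟨hθ', hpθ'⟩ hC
  simp only at hC
  obtain ⟨hrange, hs, hc, hw⟩ := (mem_S_iff θ).1 hθ
  obtain ⟨hrange', hs', hc', hw'⟩ := (mem_S_iff θ').1 hθ'
  have hqC : q < ∑ μ, Real.cos (θ μ) := C_gt_q hm hq0 hq1 hθ
  have hC0 : (0:ℝ) < ∑ μ, Real.cos (θ μ) := hq0.trans hqC
  have hqC' : q < ∑ μ, Real.cos (θ' μ) := C_gt_q hm hq0 hq1 hθ'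
  have hcosne : ∀ (ψ : Fin (2*m+1) → ℝ), ψ ∈ S m q → ∀ ν, Real.cos (ψ ν) ≠ 0 := by
    intro ψ hψ ν
    obtain ⟨hrg, hsg, hcg, hwg⟩ := (mem_S_iff ψ).1 hψ
    have hqCg : q < ∑ μ, Real.cos (ψ μ) := C_gt_q hm hq0 hq1 hψ
    have hCg0 : (0:ℝ) < ∑ μ, Real.cos (ψ μ) := hq0.trans hqCg
    have hsing : Real.sin (ψ ν) = w m q ν / (∑ μ, Real.cos (ψ μ)) := by
      rw [hwg ν, mul_div_cancel_left₀ _ (ne_of_gt hCg0)]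
    have hpyth := Real.sin_sq_add_cos_sq (ψ ν)
    intro hzero
    rw [hzero] at hpyth
    -- then sin² = 1, so (w ν)² = C², but (w ν)² ≤ q² < C²
    have h1 : Real.sin (ψ ν) ^ 2 = 1 := by nlinarith
    rw [hsing, div_pow] at h1
    have h2 : (w m q ν) ^ 2 = (∑ μ, Real.cos (ψ μ)) ^ 2 := by
      field_simp at h1
      linarith [h1]
    have h3 : |w m q ν| ≤ q := w_abs_le hq0.le ν
    nlinarith [abs_nonneg (w m q ν), sq_abs (w m q ν), hqCg, hq0, h3]
  funext ν
  have e1 : θ ν = recover (decide (0 < Real.cos (θ ν))) (Real.sin (θ ν)) :=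
    (recover_retract (hrange ν) (hcosne θ hθ ν)).symm
  have e2 : θ' ν = recover (decide (0 < Real.cos (θ' ν))) (Real.sin (θ' ν)) :=
    (recover_retract (hrange' ν) (hcosne θ' hθ' ν)).symm
  have esin : Real.sin (θ ν) = Real.sin (θ' ν) := by
    have h1 := hw ν
    have h2 := hw' ν
    rw [← hC] at h2
    exact mul_left_cancel₀ (ne_of_gt hC0) (h1 ▸ h2)
  have ecos : (0 < Real.cos (θ ν)) = (0 < Real.cos (θ' ν)) := by
    have m1 : (ν ∈ pat θ) = (0 < Real.cos (θ ν)) := by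
      unfold pat; simp [Finset.mem_filter]
    have m2 : (ν ∈ pat θ') = (0 < Real.cos (θ' ν)) := by
      unfold pat; simp [Finset.mem_filter]
    rw [← m1, ← m2, hpθ, hpθ']
  rw [e1, e2, esin, decide_eq_decide.2 (iff_of_eq ecos)]

/-- Surjectivity of the sum-of-cosines map onto the root set. -/
lemma surj_fib {m : ℕ} {q : ℝ} (hm : 1 ≤ m) (hq0 : 0 < q) (hq1 : q < 1)
    (s : Finset (Fin (2*m+1))) :
    Set.SurjOn (fun θ => ∑ μ, Real.cos (θ μ)) (fib m q s) (rset q (Jv m s) (ev m s)) := by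
  rintro C ⟨hqC, heq⟩
  have hC0 : 0 < C := hq0.trans hqC
  set t := Real.sqrt (1 - q ^ 2 / C ^ 2) with htdef
  have ht2 : t ^ 2 = 1 - q ^ 2 / C ^ 2 := aux_sq hq0 hqC
  have ht0 : 0 < t := aux_sqrt_pos hq0 hqC
  -- bounds on w/C
  have hb : ∀ ν : Fin (2*m+1), -1 ≤ w m q ν / C ∧ w m q ν / C ≤ 1 := by
    intro ν
    have h1 : |w m q ν| ≤ q := w_abs_le hq0.le ν
    have h2 : |w m q ν / C| ≤ 1 := by
      rw [abs_div, abs_of_pos hC0, div_le_one hC0]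
      linarith
    exact abs_le.1 h2
  set θ : Fin (2*m+1) → ℝ := fun ν => recover (decide (ν ∈ s)) (w m q ν / C) with hθdef
  have hsin : ∀ ν, Real.sin (θ ν) = w m q ν / C := by
    intro ν
    exact sin_recover _ (hb ν).1 (hb ν).2
  have hcosv : ∀ ν, Real.cos (θ ν)
      = (if decide (ν ∈ s) then (1:ℝ) else -1) * Real.sqrt (1 - (w m q ν / C) ^ 2) := by
    intro ν
    exact cos_recover _ _
  have hcos : ∀ ν, ν ≠ lastI m → Real.cos (θ ν) = (if ν ∈ s then t else -t) := by
    intro ν hν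
    rw [hcosv ν, div_pow, w_sq ν hν, ← div_pow]
    rcases em (ν ∈ s) with h | h
    · rw [if_pos h, decide_eq_true h, if_pos rfl, one_mul, htdef]
      congr 1
      rw [div_pow]
    · rw [if_neg h, decide_eq_false h, htdef]
      norm_num
      congr 1
      rw [div_pow]
  have hcoslast : Real.cos (θ (lastI m)) = (if lastI m ∈ s then (1:ℝ) else -1) := by
    rw [hcosv (lastI m), w_last, zero_div]
    norm_num
  have hsumcos : (∑ μ, Real.cos (θ μ)) = C := by
    rw [sum_cos_eq s t (fun ν => Real.cos (θ ν)) hcos hcoslast]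
    linarith [heq]
  have hsumsin : (∑ μ, Real.sin (θ μ)) = 0 := by
    have h1 : (∑ μ, Real.sin (θ μ)) = ∑ μ : Fin (2*m+1), w m q μ / C :=
      Finset.sum_congr rfl (fun μ _ => hsin μ)
    rw [h1, ← Finset.sum_div]
    have h2 : (∑ μ : Fin (2*m+1), w m q μ) = m * q + m * (-q) + 0 := sum_ite_fin m q (-q) 0
    rw [h2]
    ring_nf
  have hmemS : θ ∈ S m q := by
    rw [mem_S_iff]
    refine ⟨fun ν => recover_mem_Ioc _ _, hsumsin, by rw [hsumcos]; exact hC0.le, fun ν => ?_⟩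
    rw [hsumcos, hsin ν, mul_div_cancel₀ _ (ne_of_gt hC0)]
  have hpat : pat θ = s := by
    ext ν
    unfold pat
    simp only [Finset.mem_filter, Finset.mem_univ, true_and]
    constructor
    · intro h
      by_contra hns
      rcases em (ν = lastI m) with rfl | hne
      · rw [hcoslast, if_neg hns] at h; linarith
      · rw [hcos ν hne, if_neg hns] at h; linarith
    · intro h
      rcases em (ν = lastI m) with rfl | hne
      · rw [hcoslast, if_pos h]; norm_num
      · rw [hcos ν hne, if_pos h]; exact ht0
  exact ⟨θ, ⟨hmemS, hpat⟩, hsumcos⟩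

/-- Cardinality of a fiber. -/
lemma fib_ncard {m : ℕ} {q : ℝ} (hm : 1 ≤ m) (hq0 : 0 < q) (hq1 : q < 1)
    (hq2 : q ^ 2 < (414 - 66 * Real.sqrt 33) / 256) (s : Finset (Fin (2*m+1))) :
    (fib m q s).Finite ∧
      (fib m q s).ncard = (if lastI m ∈ s then 1 else
        if m < (s.erase (lastI m)).card then 2 else 0) := by
  have he : ev m s = 1 ∨ ev m s = -1 := by
    unfold ev; split_ifs
    · exact Or.inl rfl
    · exact Or.inr rfl
  have hJint : Jv m s = 0 ∨ 2 ≤ Jv m s ∨ Jv m s ≤ -2 := by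
    unfold Jv
    rcases lt_trichotomy ((s.erase (lastI m)).card) m with h | h | h
    · right; right
      have : ((s.erase (lastI m)).card : ℝ) + 1 ≤ m := by exact_mod_cast h
      linarith
    · left; rw [h]; ring
    · right; left
      have : (m:ℝ) + 1 ≤ ((s.erase (lastI m)).card : ℝ) := by exact_mod_cast h
      linarith
  obtain ⟨hfin, hcard⟩ := rset_spec hq0 hq1 hq2 he hJint
  have hbij : Set.BijOn (fun θ => ∑ μ, Real.cos (θ μ)) (fib m q s)
      (rset q (Jv m s) (ev m s)) := by
    refine ⟨?_, inj_fib hm hq0 hq1 s, surj_fib hm hq0 hq1 s⟩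
    rintro θ ⟨hθ, hpθ⟩
    have := maps_fib hm hq0 hq1 hθ
    rwa [hpθ] at this
  have himg : (fun θ => ∑ μ, Real.cos (θ μ)) '' (fib m q s) = rset q (Jv m s) (ev m s) :=
    hbij.image_eq
  constructor
  · exact Set.Finite.of_finite_image (himg ▸ hfin) hbij.injOn
  · rw [← Set.ncard_image_of_injOn hbij.injOn, himg, hcard]
    -- translate the conditions
    have hev : (ev m s = 1) ↔ (lastI m ∈ s) := by
      unfold ev; split_ifs with h
      · simp [h]
      · simp only [h, iff_false]
        norm_num
    have hJv : (2 ≤ Jv m s) ↔ (m < (s.erase (lastI m)).card) := by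
      unfold Jv
      constructor
      · intro h
        by_contra hn
        push_neg at hn
        have : ((s.erase (lastI m)).card : ℝ) ≤ m := by exact_mod_cast hn
        linarith
      · intro h
        have : (m:ℝ) + 1 ≤ ((s.erase (lastI m)).card : ℝ) := by exact_mod_cast h
        linarith
    rcases em (lastI m ∈ s) with h | h
    · rw [if_pos (hev.2 h), if_pos h]
    · rw [if_neg (fun hh => h (hev.1 hh)), if_neg h]
      rcases em (m < (s.erase (lastI m)).card) with h2 | h2
      · rw [if_pos (hJv.2 h2), if_pos h2]
      · rw [if_neg (fun hh => h2 (hJv.1 hh)), if_neg h2]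

/-- `ncard` of a finite disjoint union. -/
lemma ncard_biUnion {α ι : Type*} [DecidableEq ι] (t : Finset ι) (f : ι → Set α)
    (hfin : ∀ i ∈ t, (f i).Finite)
    (hdisj : ∀ i ∈ t, ∀ j ∈ t, i ≠ j → Disjoint (f i) (f j)) :
    (⋃ i ∈ t, f i).ncard = ∑ i ∈ t, (f i).ncard := by
  induction t using Finset.induction_on with
  | empty => simp
  | @insert a t ha ih =>
    rw [Finset.sum_insert ha, Finset.set_biUnion_insert]
    have hfin' : ∀ i ∈ t, (f i).Finite := fun i hi => hfin i (Finset.mem_insert_of_mem hi)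
    have hUfin : (⋃ i ∈ t, f i).Finite := by
      rw [← Finset.set_biUnion_coe]
      exact Set.Finite.biUnion t.finite_toSet (fun i hi => hfin' i hi)
    have hd : Disjoint (f a) (⋃ i ∈ t, f i) := by
      rw [Set.disjoint_left]
      intro x hxa hxU
      obtain ⟨i, hi, hx⟩ := Set.mem_iUnion₂.1 hxU
      exact Set.disjoint_left.1
        (hdisj a (Finset.mem_insert_self a t) i (Finset.mem_insert_of_mem hi)
          (fun h => ha (h ▸ hi))) hxa hx
    rw [Set.ncard_union_eq hd (hfin a (Finset.mem_insert_self a t)) hUfin,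
      ih hfin' (fun i hi j hj hij =>
        hdisj i (Finset.mem_insert_of_mem hi) j (Finset.mem_insert_of_mem hj) hij)]

/-- The key binomial-sum computation. -/
lemma choose_sum_arith (m : ℕ) :
    (∑ j ∈ Finset.range (2*m+1), (2*m).choose j • (if m < j then 2 else 0)) + 2^(2*m)
      = 2^(2*m+1) - (2*m).choose m := by
  have hT : (∑ j ∈ Finset.range (2*m+1), (2*m).choose j • (if m < j then 2 else 0))
      = 2 * ∑ j ∈ Finset.range (2*m+1), (if m < j then (2*m).choose j else 0) := by
    rw [Finset.mul_sum]
    apply Finset.sum_congr rfl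
    intro j _
    rcases em (m < j) with h | h
    · rw [if_pos h, if_pos h, smul_eq_mul]; ring
    · rw [if_neg h, if_neg h, smul_eq_mul]; ring
  have hBT : (∑ j ∈ Finset.range (2*m+1), (if j < m then (2*m).choose j else 0))
      = ∑ j ∈ Finset.range (2*m+1), (if m < j then (2*m).choose j else 0) := by
    rw [← Finset.sum_range_reflect (fun j => if m < j then (2*m).choose j else 0) (2*m+1)]
    apply Finset.sum_congr rfl
    intro j hj
    rw [Finset.mem_range] at hj
    have hj' : j ≤ 2*m := by omega
    have e1 : 2*m+1-1-j = 2*m - j := by omega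
    rw [e1]
    rcases em (j < m) with h | h
    · rw [if_pos h, if_pos (by omega : m < 2*m - j), Nat.choose_symm hj']
    · rw [if_neg h, if_neg (by omega : ¬ m < 2*m - j)]
  have hsplit : (∑ j ∈ Finset.range (2*m+1), (2*m).choose j)
      = (∑ j ∈ Finset.range (2*m+1), (if j < m then (2*m).choose j else 0))
        + ((∑ j ∈ Finset.range (2*m+1), (if j = m then (2*m).choose j else 0))
        + (∑ j ∈ Finset.range (2*m+1), (if m < j then (2*m).choose j else 0))) := by
    rw [← Finset.sum_add_distrib, ← Finset.sum_add_distrib]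
    apply Finset.sum_congr rfl
    intro j _
    rcases lt_trichotomy j m with h | h | h
    · rw [if_pos h, if_neg (by omega), if_neg (by omega)]
      omega
    · rw [if_neg (by omega), if_pos h, if_neg (by omega)]
      omega
    · rw [if_neg (by omega), if_neg (by omega), if_pos h]
      omega
  have hmid : (∑ j ∈ Finset.range (2*m+1), (if j = m then (2*m).choose j else 0))
      = (2*m).choose m := by
    rw [Finset.sum_ite_eq' (Finset.range (2*m+1)) m, if_pos (Finset.mem_range.2 (by omega))]
  have htotal := Nat.sum_range_choose (2*m)
  have hpow : 2^(2*m+1) = 2 * 2^(2*m) := by rw [pow_succ]; ring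
  rw [hT]
  omega

/-- Main count for the specific model. -/
lemma main_count (m : ℕ) (q : ℝ) (hm : 1 ≤ m) (hq0 : 0 < q) (hq1 : q < 1)
    (hq2 : q ^ 2 < (414 - 66 * Real.sqrt 33) / 256) :
    (S m q).ncard = 2^(2*m+1) - (2*m).choose m := by
  classical
  have hcover : S m q = ⋃ s ∈ (Finset.univ : Finset (Finset (Fin (2*m+1)))), fib m q s := by
    ext θ
    constructor
    · intro hθ
      exact Set.mem_biUnion (Finset.mem_univ (pat θ)) ⟨hθ, rfl⟩
    · intro hθ
      obtain ⟨s, _, hfib⟩ := Set.mem_iUnion₂.1 hθ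
      exact hfib.1
  rw [hcover, ncard_biUnion _ _ (fun s _ => (fib_ncard hm hq0 hq1 hq2 s).1)
    (fun s _ s' _ hss => Set.disjoint_left.2 (fun {x} hx1 hx2 => hss (hx1.2.symm.trans hx2.2)))]
  have hstep : (∑ s ∈ (Finset.univ : Finset (Finset (Fin (2*m+1)))), (fib m q s).ncard)
      = ∑ s ∈ (Finset.univ : Finset (Finset (Fin (2*m+1)))),
          (if lastI m ∈ s then 1 else if m < (s.erase (lastI m)).card then 2 else 0) :=
    Finset.sum_congr rfl (fun s _ => (fib_ncard hm hq0 hq1 hq2 s).2)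
  rw [hstep, ← Finset.powerset_univ]
  rw [show (Finset.univ : Finset (Fin (2*m+1)))
      = insert (lastI m) (Finset.univ.erase (lastI m))
    from (Finset.insert_erase (Finset.mem_univ _)).symm]
  rw [Finset.sum_powerset_insert (Finset.notMem_erase _ _)]
  have ecard : (Finset.univ.erase (lastI m)).card = 2*m := by
    rw [Finset.card_erase_of_mem (Finset.mem_univ _), Finset.card_univ, Fintype.card_fin]
    omega
  have hA : (∑ t ∈ (Finset.univ.erase (lastI m)).powerset,
      (if lastI m ∈ t then 1 else if m < (t.erase (lastI m)).card then 2 else 0))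
      = ∑ j ∈ Finset.range (2*m+1), (2*m).choose j • (if m < j then 2 else 0) := by
    have h1 : ∀ t ∈ (Finset.univ.erase (lastI m)).powerset,
        (if lastI m ∈ t then (1:ℕ) else if m < (t.erase (lastI m)).card then 2 else 0)
          = (if m < t.card then 2 else 0) := by
      intro t ht
      have hnt : lastI m ∉ t :=
        fun h => (Finset.notMem_erase (lastI m) Finset.univ) ((Finset.mem_powerset.1 ht) h)
      rw [if_neg hnt, Finset.erase_eq_of_notMem hnt]
    have h2 := Finset.sum_powerset_apply_card (f := fun k => if m < k then (2:ℕ) else 0)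
      (x := Finset.univ.erase (lastI m))
    rw [Finset.sum_congr rfl h1, h2, ecard]
  have hB : (∑ t ∈ (Finset.univ.erase (lastI m)).powerset,
      (if lastI m ∈ insert (lastI m) t then (1:ℕ)
        else if m < ((insert (lastI m) t).erase (lastI m)).card then 2 else 0)) = 2^(2*m) := by
    have h1 : ∀ t ∈ (Finset.univ.erase (lastI m)).powerset,
        (if lastI m ∈ insert (lastI m) t then (1:ℕ)
          else if m < ((insert (lastI m) t).erase (lastI m)).card then 2 else 0) = 1 :=
      fun t _ => if_pos (Finset.mem_insert_self _ _)
    rw [Finset.sum_congr rfl h1, Finset.sum_const, Finset.card_powerset, ecard, smul_eq_mul,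
      mul_one]
  rw [hA, hB]
  exact choose_sum_arith m

end

end KurAux

theorem card_equilibria_odd_case (n : ℕ) (hn : 3 ≤ n) (hodd : Odd n)
    (q : ℝ) (hq0 : 0 < q) (hqo : q < Real.sqrt (414 - 66 * Real.sqrt 33) / 16) :
    (kuramotoEquilibria n
        (fun μ => if (μ : ℕ) < (n - 1) / 2 then (n : ℝ) * q
          else if (μ : ℕ) < n - 1 then -((n : ℝ) * q) else 0)
        (fun _ => (n : ℝ))).ncard =
      2 ^ n - (n - 1).choose ((n - 1) / 2) := by
  obtain ⟨m, hm'⟩ := hodd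
  have hmn : n = 2*m+1 := by omega
  subst hmn
  have hm : 1 ≤ m := by omega
  have h33 : Real.sqrt 33 ^ 2 = 33 := Real.sq_sqrt (by norm_num)
  have h33n : 0 ≤ Real.sqrt 33 := Real.sqrt_nonneg _
  have h33u : Real.sqrt 33 < 5.75 := by nlinarith
  have h33l : 5.7 < Real.sqrt 33 := by nlinarith
  have hX : (0:ℝ) < 414 - 66*Real.sqrt 33 := by nlinarith
  have hq2 : q^2 < (414 - 66*Real.sqrt 33)/256 := by
    have h16 : 16*q < Real.sqrt (414 - 66*Real.sqrt 33) := by linarith [hqo]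
    have hs := Real.sq_sqrt hX.le
    nlinarith [h16, hs, Real.sqrt_nonneg (414 - 66*Real.sqrt 33), hq0]
  have hq1 : q < 1 := by nlinarith
  have e1 : 2*m+1-1 = 2*m := by omega
  have e2 : (2*m)/2 = m := by omega
  simp only [e1, e2]
  exact KurAux.main_count m q hm hq0 hq1 hq2
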